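/- A balanced graph is a critical point of the total length functional: with 𝓛(x) = (1/2)∑_{h∈H}‖x_h‖ on antisymmetric ℝ²-valued functions, and F^hor_{b(v)}(x) = ∑_{h∈v} x_h/‖x_h‖, one has for any variation χ = grad(f) (f : V → ℝ²): D𝓛(x°)·χ = −∑_{v∈V} ⟨F^hor_{b(v)}(x°), f_v⟩. Consequently F^hor_{b(v)}(x°) = 0 for all v if and only if x° is a critical point of 𝓛 restricted to the affine subspace {x : curl(x) = curl(x°)}. -/

import Mathlib

open scoped RealInnerProductSpace

lemma aux_norm_deriv {E : Type*} [NormedAddCommGroup E] [InnerProductSpace ℝ E]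
    (x c : E) (hx : x ≠ 0) :
    HasDerivAt (fun t : ℝ => ‖x + t • c‖) (inner ℝ (‖x‖⁻¹ • x) c : ℝ) 0 := by
  have hg : HasDerivAt (fun t : ℝ => x + t • c) c 0 := by
    simpa using ((hasDerivAt_id (0:ℝ)).smul_const c).const_add x
  have hq := hg.norm_sq
  have hq0 : ‖x + (0:ℝ) • c‖ ^ 2 ≠ 0 := by
    simp [pow_eq_zero_iff, hx]
  have := hq.sqrt hq0
  have heq : (fun t : ℝ => Real.sqrt (‖x + t • c‖ ^ 2)) = fun t : ℝ => ‖x + t • c‖ := by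
    ext t; rw [Real.sqrt_sq (norm_nonneg _)]
  rw [heq] at this
  convert this using 1
  rw [real_inner_smul_left]
  simp only [zero_smul, add_zero, Real.sqrt_sq (norm_nonneg _)]
  field_simp

theorem statement9 {H V : Type*} [Fintype H] [Fintype V] [DecidableEq V]
    (ι : H → H) (vmap : H → V)
    (hinv : ∀ h, ι (ι h) = h) (hfree : ∀ h, ι h ≠ h)
    (x : H → EuclideanSpace ℝ (Fin 2))
    (hx0 : ∀ h, x h ≠ 0) (hxa : ∀ h, x (ι h) = - x h) :
    (∀ f : V → EuclideanSpace ℝ (Fin 2),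
      deriv (fun t : ℝ =>
          (1/2) * ∑ h, ‖x h + t • (f (vmap (ι h)) - f (vmap h))‖) 0
        = - ∑ v, (inner ℝ (∑ h ∈ Finset.univ.filter (fun h => vmap h = v),
            ‖x h‖⁻¹ • x h) (f v) : ℝ)) ∧
    ((∀ v : V, ∑ h ∈ Finset.univ.filter (fun h => vmap h = v), ‖x h‖⁻¹ • x h = 0) ↔
      ∀ f : V → EuclideanSpace ℝ (Fin 2),
        deriv (fun t : ℝ =>
            (1/2) * ∑ h, ‖x h + t • (f (vmap (ι h)) - f (vmap h))‖) 0 = 0) := by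
  set u : H → EuclideanSpace ℝ (Fin 2) := fun h => ‖x h‖⁻¹ • x h with hu
  set F : V → EuclideanSpace ℝ (Fin 2) :=
    fun v => ∑ h ∈ Finset.univ.filter (fun h => vmap h = v), u h with hF
  have hu_ι : ∀ h, u (ι h) = - u h := by
    intro h; simp [hu, hxa h, norm_neg]
  have key : ∀ f : V → EuclideanSpace ℝ (Fin 2),
      deriv (fun t : ℝ =>
          (1/2) * ∑ h, ‖x h + t • (f (vmap (ι h)) - f (vmap h))‖) 0
        = - ∑ v, (inner ℝ (F v) (f v) : ℝ) := by
    intro f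
    set c : H → EuclideanSpace ℝ (Fin 2) :=
      fun h => f (vmap (ι h)) - f (vmap h) with hc
    have hsum : HasDerivAt (fun t : ℝ => ∑ h, ‖x h + t • c h‖)
        (∑ h, (inner ℝ (u h) (c h) : ℝ)) 0 :=
      HasDerivAt.fun_sum fun h _ => aux_norm_deriv (x h) (c h) (hx0 h)
    have hD := hsum.const_mul (1/2 : ℝ)
    rw [hD.deriv]
    have e : H ≃ H := ⟨ι, ι, hinv, hinv⟩
    have hA : ∑ h, (inner ℝ (u h) (f (vmap (ι h))) : ℝ)
        = - ∑ h, (inner ℝ (u h) (f (vmap h)) : ℝ) := by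
      have := Fintype.sum_equiv (⟨ι, ι, hinv, hinv⟩ : H ≃ H)
        (fun h => (inner ℝ (u h) (f (vmap (ι h))) : ℝ))
        (fun h => (inner ℝ (- u h) (f (vmap h)) : ℝ))
        (fun h => by simp only [Equiv.coe_fn_mk]; rw [← hu_ι, hinv])
      rw [this, ← Finset.sum_neg_distrib]
      exact Finset.sum_congr rfl fun h _ => by rw [inner_neg_left]
    have hS : ∑ h, (inner ℝ (u h) (c h) : ℝ)
        = - (2 * ∑ h, (inner ℝ (u h) (f (vmap h)) : ℝ)) := by
      simp only [hc, inner_sub_right]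
      rw [Finset.sum_sub_distrib, hA]; ring
    have hB : ∑ h, (inner ℝ (u h) (f (vmap h)) : ℝ)
        = ∑ v, (inner ℝ (F v) (f v) : ℝ) := by
      rw [← Finset.sum_fiberwise Finset.univ vmap (fun h => (inner ℝ (u h) (f (vmap h)) : ℝ))]
      refine Finset.sum_congr rfl fun v _ => ?_
      rw [hF, sum_inner]
      refine Finset.sum_congr rfl fun h hh => ?_
      rw [(Finset.mem_filter.1 hh).2]
    rw [hS, hB]; ring
  refine ⟨key, ?_, ?_⟩
  · intro hbal f
    rw [key f]
    rw [Finset.sum_eq_zero fun v _ => by show (inner ℝ (F v) (f v) : ℝ) = 0; rw [show F v = 0 from hbal v]; simp, neg_zero]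
  · intro hcrit v
    have := hcrit F
    rw [key F] at this
    have hz : ∑ v, (inner ℝ (F v) (F v) : ℝ) = 0 := by linarith [this]
    have hall := (Finset.sum_eq_zero_iff_of_nonneg
      (fun v _ => real_inner_self_nonneg)).1 hz v (Finset.mem_univ v)
    exact inner_self_eq_zero.1 hall
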